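/- Let T(x) = D(x − α∇f(x)) where f(x) = (1/2)‖Ax − y‖², D is (1+ε)-Lipschitz, and suppose (1+ε)·max{|1 − α λ_min|, |1 − α λ_max|} < 1 where λ_min, λ_max are the smallest and largest eigenvalues of AᴴA. Then T is a contraction on ℂ^N with contraction constant (1+ε)·max{|1 − αλ_min|, |1 − αλ_max|}, and hence admits a unique fixed point. -/

import Mathlib

open Matrix in
theorem stmt_15 (M N : ℕ) (D : EuclideanSpace ℂ (Fin N) → EuclideanSpace ℂ (Fin N))
    (ε : ℝ) (hε : 0 < ε)
    (hD : ∀ x y, ‖D x - D y‖ ≤ (1 + ε) * ‖x - y‖)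
    (A : Matrix (Fin M) (Fin N) ℂ) (y : EuclideanSpace ℂ (Fin M))
    (α : ℝ) (hα : 0 < α)
    (T : EuclideanSpace ℂ (Fin N) → EuclideanSpace ℂ (Fin N))
    (hT : ∀ x, T x = D (x - (α : ℂ) •
      Matrix.toEuclideanLin Aᴴ (Matrix.toEuclideanLin A x - y)))
    (lmin lmax : ℝ)
    (hmin : (lmin : ℂ) ∈ spectrum ℂ (Aᴴ * A))
    (hmax : (lmax : ℂ) ∈ spectrum ℂ (Aᴴ * A))
    (hbetween : ∀ μ ∈ spectrum ℂ (Aᴴ * A), lmin ≤ μ.re ∧ μ.re ≤ lmax)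
    (hcontr : (1 + ε) * max |1 - α * lmin| |1 - α * lmax| < 1) :
    (∀ x z, ‖T x - T z‖ ≤ (1 + ε) * max |1 - α * lmin| |1 - α * lmax| * ‖x - z‖) ∧
      (∃! xs, T xs = xs) := by
  set c : ℝ := max |1 - α * lmin| |1 - α * lmax| with hc
  have hc0 : 0 ≤ c := le_trans (abs_nonneg _) (le_max_left _ _)
  -- the Hermitian matrix and its symmetric operator
  have hH : (Aᴴ * A).IsHermitian := Matrix.isHermitian_conjTranspose_mul_self A
  set L : EuclideanSpace ℂ (Fin N) →ₗ[ℂ] EuclideanSpace ℂ (Fin N) :=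
    Matrix.toEuclideanLin (Aᴴ * A) with hL
  have hS : L.IsSymmetric := Matrix.isHermitian_iff_isSymmetric.1 hH
  have hn : Module.finrank ℂ (EuclideanSpace ℂ (Fin N)) = N := by
    simp [finrank_euclideanSpace]
  set b := hS.eigenvectorBasis hn with hb
  set μ := hS.eigenvalues hn with hμ
  -- each eigenvalue lies in [lmin, lmax]
  have hμmem : ∀ i, ((μ i : ℂ)) ∈ spectrum ℂ (Aᴴ * A) := by
    intro i
    have h1 : Module.End.HasEigenvalue L ((μ i : ℂ)) := hS.hasEigenvalue_eigenvalues hn i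
    have h2 := Module.End.hasEigenvalue_iff_mem_spectrum.mp h1
    rwa [Matrix.spectrum_toEuclideanLin] at h2
  have habs : ∀ i, |1 - α * μ i| ≤ c := by
    intro i
    obtain ⟨h1, h2⟩ := hbetween _ (hμmem i)
    simp only [Complex.ofReal_re] at h1 h2
    have hle1 : 1 - α * lmax ≤ 1 - α * μ i := by nlinarith
    have hle2 : 1 - α * μ i ≤ 1 - α * lmin := by nlinarith
    calc |1 - α * μ i| ≤ max |1 - α * lmax| |1 - α * lmin| :=
          abs_le_max_abs_abs hle1 hle2
      _ = c := max_comm _ _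
  -- key norm bound
  have key : ∀ v : EuclideanSpace ℂ (Fin N), ‖v - (α : ℂ) • L v‖ ≤ c * ‖v‖ := by
    intro v
    have hrepr : ∀ i, b.repr (v - (α : ℂ) • L v) i
        = ((1 - α * μ i : ℝ) : ℂ) * b.repr v i := by
      intro i
      have h := hS.eigenvectorBasis_apply_self_apply hn v i
      rw [← hμ, ← hb] at h
      have hs : b.repr (v - (α : ℂ) • L v) i = b.repr v i - (α : ℂ) * b.repr (L v) i := by
        rw [map_sub, LinearIsometryEquiv.map_smul]
        rfl
      rw [hs, h]
      push_cast
      ring_nf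
      rfl
    have h1 : ‖v - (α : ℂ) • L v‖ = ‖b.repr (v - (α : ℂ) • L v)‖ :=
      (b.repr.norm_map _).symm
    have h2 : ‖v‖ = ‖b.repr v‖ := (b.repr.norm_map _).symm
    rw [h1, h2, EuclideanSpace.norm_eq, EuclideanSpace.norm_eq]
    rw [show c * Real.sqrt (∑ i, ‖b.repr v i‖ ^ 2)
        = Real.sqrt (c ^ 2 * ∑ i, ‖b.repr v i‖ ^ 2) by
      rw [Real.sqrt_mul (by positivity), Real.sqrt_sq hc0]]
    apply Real.sqrt_le_sqrt
    rw [Finset.mul_sum]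
    apply Finset.sum_le_sum
    intro i _
    rw [hrepr i, norm_mul, Complex.norm_real, Real.norm_eq_abs, mul_pow]
    have := habs i
    have h4 : |1 - α * μ i| ^ 2 ≤ c ^ 2 := by nlinarith [abs_nonneg (1 - α * μ i)]
    nlinarith [norm_nonneg (b.repr v i), sq_nonneg (‖b.repr v i‖)]
  -- composition identity
  have hcomp : ∀ v : EuclideanSpace ℂ (Fin N),
      Matrix.toEuclideanLin Aᴴ (Matrix.toEuclideanLin A v) = L v := by
    intro v
    simp [Matrix.toEuclideanLin_apply, hL, Matrix.mulVec_mulVec]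
  -- the contraction estimate
  have contr : ∀ x z, ‖T x - T z‖ ≤ (1 + ε) * c * ‖x - z‖ := by
    intro x z
    rw [hT x, hT z]
    refine le_trans (hD _ _) ?_
    have harg : (x - (α : ℂ) • Matrix.toEuclideanLin Aᴴ (Matrix.toEuclideanLin A x - y))
        - (z - (α : ℂ) • Matrix.toEuclideanLin Aᴴ (Matrix.toEuclideanLin A z - y))
        = (x - z) - (α : ℂ) • L (x - z) := by
      rw [← hcomp (x - z)]
      simp only [map_sub, smul_sub]
      abel
    rw [harg, mul_assoc]
    exact mul_le_mul_of_nonneg_left (key (x - z)) (by positivity)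
  refine ⟨contr, ?_⟩
  -- unique fixed point via Banach
  have hK0 : 0 ≤ (1 + ε) * c := by positivity
  set K : NNReal := ⟨(1 + ε) * c, hK0⟩ with hK
  have hlip : LipschitzWith K T := by
    apply LipschitzWith.of_dist_le_mul
    intro x z
    rw [dist_eq_norm, dist_eq_norm]
    exact contr x z
  have hcw : ContractingWith K T := ⟨by exact_mod_cast hcontr, hlip⟩
  exact ⟨hcw.fixedPoint T, hcw.fixedPoint_isFixedPt, fun z hz => hcw.fixedPoint_unique hz⟩
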